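/- Lower semicontinuity of entropy under weak L¹ convergence: let μ be a probability measure, K ∈ ℝ, and (ρ_n)_{n≥1}, ρ nonnegative measurable functions with ∫ ρ_n dμ = 1 and ∫ ρ_n·log ρ_n dμ ≤ K for every n, such that ∫ ρ_n·g dμ → ∫ ρ·g dμ for every bounded measurable g (weak convergence in L¹(μ)). Then ∫ ρ·log ρ dμ ≤ K. -/

import Mathlib

open MeasureTheory Filter

/-- Young-type inequality: `x * t ≤ x log x + exp (t - 1)` for `x ≥ 0`. -/
lemma entropy_young_ineq {x t : ℝ} (hx : 0 ≤ x) :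
    x * t ≤ x * Real.log x + Real.exp (t - 1) := by
  rcases eq_or_lt_of_le hx with h | h
  · simp [← h]
    positivity
  · have h1 : t - Real.log x ≤ Real.exp (t - 1 - Real.log x) := by
      have := Real.add_one_le_exp (t - 1 - Real.log x); linarith
    have h2 : x * (t - Real.log x) ≤ x * Real.exp (t - 1 - Real.log x) :=
      mul_le_mul_of_nonneg_left h1 hx
    have h3 : x * Real.exp (t - 1 - Real.log x) = Real.exp (t - 1) := by
      rw [Real.exp_sub, Real.exp_log h]; field_simp
    nlinarith

/-- `x (1 + log x) ≥ -1` for `x > 0`. -/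
lemma entropy_one_add_log_lb {x : ℝ} (hx : 0 < x) : -1 ≤ x * (1 + Real.log x) := by
  have h := Real.add_one_le_exp (-(Real.log x) - 2)
  have hx' : Real.exp (-(Real.log x) - 2) = Real.exp (-2) / x := by
    rw [show -(Real.log x) - 2 = (-2 : ℝ) - Real.log x by ring, Real.exp_sub, Real.exp_log hx]
  have h2 : x * (-(Real.log x) - 1) ≤ Real.exp (-2) := by
    rw [hx'] at h
    calc x * (-(Real.log x) - 1) ≤ x * (Real.exp (-2) / x) :=
          mul_le_mul_of_nonneg_left (by linarith) hx.le
      _ = Real.exp (-2) := by field_simp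
  have he : Real.exp (-2 : ℝ) ≤ 1 := by
    rw [Real.exp_le_one_iff]; norm_num
  nlinarith

/-- `x log x ≥ -1` for `x > 0`. -/
lemma entropy_mul_log_lb {x : ℝ} (hx : 0 < x) : -1 ≤ x * Real.log x := by
  have h := Real.add_one_le_exp (-(Real.log x) - 1)
  have hx' : Real.exp (-(Real.log x) - 1) = Real.exp (-1) / x := by
    rw [show -(Real.log x) - 1 = (-1 : ℝ) - Real.log x by ring, Real.exp_sub, Real.exp_log hx]
  have h2 : x * (-(Real.log x)) ≤ Real.exp (-1) := by
    rw [hx'] at h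
    calc x * (-(Real.log x)) ≤ x * (Real.exp (-1) / x) :=
          mul_le_mul_of_nonneg_left (by linarith) hx.le
      _ = Real.exp (-1) := by field_simp
  have he : Real.exp (-1 : ℝ) ≤ 1 := by
    rw [Real.exp_le_one_iff]; norm_num
  nlinarith

/-- Lower semicontinuity of entropy under weak `L¹` convergence: if `ρ_n ≥ 0`,
`μ(ρ_n) = 1`, `μ(ρ_n log ρ_n) ≤ K` for all `n`, and `μ(ρ_n g) → μ(ρ g)` for every
bounded measurable `g`, then `μ(ρ log ρ) ≤ K` (in particular `ρ log ρ` is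
`μ`-integrable). -/
theorem entropy_lsc_of_weak_L1_convergence
    {Ω : Type*} [MeasurableSpace Ω] (μ : Measure Ω) [IsProbabilityMeasure μ]
    (K : ℝ) (ρseq : ℕ → Ω → ℝ) (ρ : Ω → ℝ)
    (hmeas : ∀ n, Measurable (ρseq n)) (hnonneg : ∀ n ω, 0 ≤ ρseq n ω)
    (hone : ∀ n, ∫ ω, ρseq n ω ∂μ = 1)
    (hent : ∀ n, Integrable (fun ω => ρseq n ω * Real.log (ρseq n ω)) μ ∧
      ∫ ω, ρseq n ω * Real.log (ρseq n ω) ∂μ ≤ K)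
    (hρ_meas : Measurable ρ) (hρ_nonneg : ∀ ω, 0 ≤ ρ ω)
    (hconv : ∀ g : Ω → ℝ, Measurable g → (∃ C, ∀ ω, |g ω| ≤ C) →
      Tendsto (fun n => ∫ ω, ρseq n ω * g ω ∂μ) atTop (nhds (∫ ω, ρ ω * g ω ∂μ))) :
    Integrable (fun ω => ρ ω * Real.log (ρ ω)) μ ∧
      ∫ ω, ρ ω * Real.log (ρ ω) ∂μ ≤ K := by
  -- integrability of the ρ_n
  have hρnint : ∀ n, Integrable (ρseq n) μ := by
    intro n
    by_contra h
    have h0 := integral_undef h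
    rw [hone n] at h0; norm_num at h0
  -- ∫ ρ = 1
  have hρ1 : ∫ ω, ρ ω ∂μ = 1 := by
    have h1 := hconv (fun _ => 1) measurable_const ⟨1, fun ω => by norm_num⟩
    simp only [mul_one] at h1
    have h2 : Tendsto (fun _ : ℕ => (1 : ℝ)) atTop (nhds (∫ ω, ρ ω ∂μ)) := by
      refine h1.congr fun n => ?_
      simpa using hone n
    exact (tendsto_nhds_unique h2 tendsto_const_nhds)
  have hρint : Integrable ρ μ := by
    by_contra h
    have h0 := integral_undef h
    rw [hρ1] at h0; norm_num at h0
  -- key duality estimate for any bounded measurable g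
  have key : ∀ g : Ω → ℝ, Measurable g → ∀ C : ℝ, (∀ ω, |g ω| ≤ C) →
      ∫ ω, ρ ω * g ω ∂μ ≤ K + ∫ ω, Real.exp (g ω - 1) ∂μ := by
    intro g hg C hC
    have hgexp : Integrable (fun ω => Real.exp (g ω - 1)) μ := by
      refine Integrable.mono' (integrable_const (Real.exp C))
        ((hg.sub measurable_const).exp).aestronglyMeasurable ?_
      filter_upwards with ω
      rw [Real.norm_eq_abs, abs_of_pos (Real.exp_pos _)]
      exact Real.exp_le_exp.2 (by have := (abs_le.1 (hC ω)).2; linarith)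
    refine le_of_tendsto (hconv g hg ⟨C, hC⟩) ?_
    filter_upwards with n
    have hint1 : Integrable (fun ω => ρseq n ω * g ω) μ := by
      have := Integrable.bdd_mul (hρnint n) hg.aestronglyMeasurable
        (Filter.Eventually.of_forall fun ω => by rw [Real.norm_eq_abs]; exact hC ω)
      simpa [mul_comm] using this
    calc ∫ ω, ρseq n ω * g ω ∂μ
        ≤ ∫ ω, (ρseq n ω * Real.log (ρseq n ω) + Real.exp (g ω - 1)) ∂μ :=
          integral_mono hint1 ((hent n).1.add hgexp)
            (fun ω => entropy_young_ineq (hnonneg n ω))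
      _ = ∫ ω, ρseq n ω * Real.log (ρseq n ω) ∂μ + ∫ ω, Real.exp (g ω - 1) ∂μ :=
          integral_add (hent n).1 hgexp
      _ ≤ K + ∫ ω, Real.exp (g ω - 1) ∂μ := by linarith [(hent n).2]
  -- the truncated test functions
  set b : ℕ → ℝ := fun M => (M : ℝ) + 1 with hbdef
  have hb1 : ∀ M, (1 : ℝ) ≤ b M := fun M => by
    have : (0 : ℝ) ≤ (M : ℝ) := Nat.cast_nonneg M
    simp only [hbdef]; linarith
  set G : ℕ → Ω → ℝ := fun M ω =>
    if ρ ω = 0 then -b M else max (-b M) (min (1 + Real.log (ρ ω)) (b M)) with hGdef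
  have hGmeas : ∀ M, Measurable (G M) := by
    intro M
    exact Measurable.ite (hρ_meas (measurableSet_singleton 0)) measurable_const
      (measurable_const.max ((measurable_const.add hρ_meas.log).min measurable_const))
  have hGbd : ∀ M ω, |G M ω| ≤ b M := by
    intro M ω
    have h1 := hb1 M
    rw [abs_le]
    simp only [hGdef]
    split
    · constructor <;> linarith
    · exact ⟨le_max_left _ _, max_le (by linarith) (min_le_right _ _)⟩
  -- exponential bound
  have hexpbd : ∀ M ω, Real.exp (G M ω - 1) ≤ ρ ω + 1 := by
    intro M ω
    have h1 := hb1 M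
    have hρω := hρ_nonneg ω
    simp only [hGdef]
    split
    · have : Real.exp (-b M - 1) ≤ 1 := Real.exp_le_one_iff.2 (by linarith)
      linarith
    · rename_i hρ0
      have hρpos : 0 < ρ ω := lt_of_le_of_ne hρω (Ne.symm hρ0)
      have hle : max (-b M) (min (1 + Real.log (ρ ω)) (b M))
          ≤ max (-b M) (1 + Real.log (ρ ω)) :=
        max_le_max le_rfl (min_le_left _ _)
      rcases le_total (-b M) (1 + Real.log (ρ ω)) with h | h
      · have : Real.exp (max (-b M) (min (1 + Real.log (ρ ω)) (b M)) - 1)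
            ≤ Real.exp (Real.log (ρ ω)) := by
          apply Real.exp_le_exp.2
          rw [max_eq_right h] at hle
          linarith
        rw [Real.exp_log hρpos] at this
        linarith
      · have : Real.exp (max (-b M) (min (1 + Real.log (ρ ω)) (b M)) - 1)
            ≤ Real.exp (-b M - 1) := by
          apply Real.exp_le_exp.2
          rw [max_eq_left h] at hle
          linarith
        have h2 : Real.exp (-b M - 1) ≤ 1 := Real.exp_le_one_iff.2 (by linarith)
        linarith
  -- lower bound on ρ G
  have hGlow : ∀ M ω, -1 ≤ ρ ω * G M ω := by
    intro M ω
    have h1 := hb1 M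
    have hρω := hρ_nonneg ω
    simp only [hGdef]
    split
    · rename_i hρ0; rw [hρ0]; norm_num
    · rename_i hρ0
      have hρpos : 0 < ρ ω := lt_of_le_of_ne hρω (Ne.symm hρ0)
      rcases le_total 0 (1 + Real.log (ρ ω)) with h | h
      · have hmin : (0 : ℝ) ≤ min (1 + Real.log (ρ ω)) (b M) := le_min h (by linarith)
        have : (0 : ℝ) ≤ max (-b M) (min (1 + Real.log (ρ ω)) (b M)) :=
          le_trans hmin (le_max_right _ _)
        nlinarith
      · have hmin : min (1 + Real.log (ρ ω)) (b M) = 1 + Real.log (ρ ω) :=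
          min_eq_left (by linarith)
        rw [hmin]
        have hG1 : 1 + Real.log (ρ ω) ≤ max (-b M) (1 + Real.log (ρ ω)) := le_max_right _ _
        have := entropy_one_add_log_lb hρpos
        nlinarith
  -- domination of ρ G by an integrable function
  have hGdom : ∀ M ω, |ρ ω * G M ω| ≤ ρ ω + |ρ ω * Real.log (ρ ω)| := by
    intro M ω
    have h1 := hb1 M
    have hρω := hρ_nonneg ω
    simp only [hGdef]
    split
    · rename_i hρ0; rw [hρ0]; simp
    · rename_i hρ0
      have hρpos : 0 < ρ ω := lt_of_le_of_ne hρω (Ne.symm hρ0)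
      have habs : |max (-b M) (min (1 + Real.log (ρ ω)) (b M))| ≤ |1 + Real.log (ρ ω)| := by
        rcases le_total 0 (1 + Real.log (ρ ω)) with h | h
        · have hmin0 : (0 : ℝ) ≤ min (1 + Real.log (ρ ω)) (b M) := le_min h (by linarith)
          rw [max_eq_right (le_trans (by linarith) hmin0), abs_of_nonneg hmin0,
            abs_of_nonneg h]
          exact min_le_left _ _
        · have hmin : min (1 + Real.log (ρ ω)) (b M) = 1 + Real.log (ρ ω) :=
            min_eq_left (by linarith)
          rw [hmin, abs_of_nonpos h]
          rw [abs_le]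
          constructor
          · exact le_trans (by linarith : -(-(1 + Real.log (ρ ω))) ≤ 1 + Real.log (ρ ω))
              (le_max_right _ _)
          · exact max_le (by linarith) (by linarith)
      calc |ρ ω * max (-b M) (min (1 + Real.log (ρ ω)) (b M))|
          = ρ ω * |max (-b M) (min (1 + Real.log (ρ ω)) (b M))| := by
            rw [abs_mul, abs_of_nonneg hρω]
        _ ≤ ρ ω * |1 + Real.log (ρ ω)| := mul_le_mul_of_nonneg_left habs hρω
        _ ≤ ρ ω + |ρ ω * Real.log (ρ ω)| := by
            rw [abs_mul, abs_of_nonneg hρω]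
            have := abs_add_le (1 : ℝ) (Real.log (ρ ω))
            have h2 : ρ ω * |1 + Real.log (ρ ω)| ≤ ρ ω * (1 + |Real.log (ρ ω)|) := by
              apply mul_le_mul_of_nonneg_left _ hρω
              calc |1 + Real.log (ρ ω)| ≤ |(1:ℝ)| + |Real.log (ρ ω)| := abs_add_le _ _
                _ = 1 + |Real.log (ρ ω)| := by rw [abs_one]
            nlinarith
  -- pointwise convergence of ρ G M to ρ (1 + log ρ)
  have hGtend : ∀ ω, Tendsto (fun M => ρ ω * G M ω) atTop
      (nhds (ρ ω * (1 + Real.log (ρ ω)))) := by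
    intro ω
    rcases eq_or_lt_of_le (hρ_nonneg ω) with h0 | hρpos
    · have : ∀ M, ρ ω * G M ω = 0 := fun M => by rw [← h0]; ring
      rw [← h0]
      simpa [this] using tendsto_const_nhds (α := ℝ) (f := atTop (α := ℕ))
        (a := (0:ℝ) * (1 + Real.log 0))
    · apply Tendsto.congr' _ (tendsto_const_nhds)
      filter_upwards [eventually_ge_atTop ⌈|1 + Real.log (ρ ω)|⌉₊] with M hM
      have hbge : |1 + Real.log (ρ ω)| ≤ b M := by
        have h1 : |1 + Real.log (ρ ω)| ≤ (⌈|1 + Real.log (ρ ω)|⌉₊ : ℝ) := Nat.le_ceil _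
        have h2 : ((⌈|1 + Real.log (ρ ω)|⌉₊ : ℕ) : ℝ) ≤ (M : ℝ) := Nat.cast_le.2 hM
        simp only [hbdef]; linarith
      have habs := abs_le.1 hbge
      have hGeq : G M ω = 1 + Real.log (ρ ω) := by
        simp only [hGdef]
        rw [if_neg (ne_of_gt hρpos), min_eq_left habs.2, max_eq_right habs.1]
      rw [hGeq]
  -- pointwise convergence of exp (G M - 1) to ρ
  have hExpTend : ∀ ω, Tendsto (fun M => Real.exp (G M ω - 1)) atTop (nhds (ρ ω)) := by
    intro ω
    rcases eq_or_lt_of_le (hρ_nonneg ω) with h0 | hρpos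
    · have hGeq : ∀ M, Real.exp (G M ω - 1) = Real.exp (-(M : ℝ) - 2) := by
        intro M
        simp only [hGdef, hbdef]
        rw [if_pos h0.symm]
        ring_nf
      rw [← h0]
      have htend : Tendsto (fun M : ℕ => -(M : ℝ) - 2) atTop atBot := by
        apply tendsto_atBot_add_const_right
        exact (tendsto_neg_atBot_iff).2 tendsto_natCast_atTop_atTop
      have := Real.tendsto_exp_atBot.comp htend
      refine this.congr fun M => ?_
      rw [hGeq M]
      rfl
    · apply Tendsto.congr' _ (tendsto_const_nhds)
      filter_upwards [eventually_ge_atTop ⌈|1 + Real.log (ρ ω)|⌉₊] with M hM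
      have hbge : |1 + Real.log (ρ ω)| ≤ b M := by
        have h1 : |1 + Real.log (ρ ω)| ≤ (⌈|1 + Real.log (ρ ω)|⌉₊ : ℝ) := Nat.le_ceil _
        have h2 : ((⌈|1 + Real.log (ρ ω)|⌉₊ : ℕ) : ℝ) ≤ (M : ℝ) := Nat.cast_le.2 hM
        simp only [hbdef]; linarith
      have habs := abs_le.1 hbge
      have hGeq : G M ω = 1 + Real.log (ρ ω) := by
        simp only [hGdef]
        rw [if_neg (ne_of_gt hρpos), min_eq_left habs.2, max_eq_right habs.1]
      rw [hGeq, show 1 + Real.log (ρ ω) - 1 = Real.log (ρ ω) by ring, Real.exp_log hρpos]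
  -- integrability facts
  have hGint : ∀ M, Integrable (fun ω => ρ ω * G M ω) μ := by
    intro M
    have := Integrable.bdd_mul hρint (hGmeas M).aestronglyMeasurable
      (Filter.Eventually.of_forall fun ω => by rw [Real.norm_eq_abs]; exact hGbd M ω)
    simpa [mul_comm] using this
  have hExpInt : ∀ M, Integrable (fun ω => Real.exp (G M ω - 1)) μ := by
    intro M
    refine Integrable.mono' (hρint.add (integrable_const 1))
      (((hGmeas M).sub measurable_const).exp).aestronglyMeasurable ?_
    filter_upwards with ω
    rw [Real.norm_eq_abs, abs_of_pos (Real.exp_pos _)]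
    exact hexpbd M ω
  -- the uniform bound on ∫ ρ G M
  have hExpLe : ∀ M, ∫ ω, Real.exp (G M ω - 1) ∂μ ≤ 2 := by
    intro M
    calc ∫ ω, Real.exp (G M ω - 1) ∂μ ≤ ∫ ω, (ρ ω + 1) ∂μ :=
          integral_mono (hExpInt M) (hρint.add (integrable_const 1)) (fun ω => hexpbd M ω)
      _ = 2 := by
          rw [integral_add hρint (integrable_const 1), hρ1, integral_const]
          norm_num
  have hub : ∀ M, ∫ ω, ρ ω * G M ω ∂μ ≤ K + 2 := by
    intro M
    have h1 := key (G M) (hGmeas M) (b M) (hGbd M)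
    linarith [hExpLe M]
  -- integrability of the positive part via Fatou
  set P : Ω → ℝ := fun ω => max (ρ ω * Real.log (ρ ω)) 0 with hPdef
  set Pm : ℕ → Ω → ℝ := fun M ω => max (ρ ω * G M ω) 0 with hPmdef
  have hPmint : ∀ M, Integrable (Pm M) μ := fun M => (hGint M).pos_part
  have hPmle : ∀ M, ∫ ω, Pm M ω ∂μ ≤ K + 3 := by
    intro M
    have hple : ∀ ω, Pm M ω ≤ ρ ω * G M ω + 1 := by
      intro ω
      simp only [hPmdef]
      rcases le_total (ρ ω * G M ω) 0 with h | h
      · rw [max_eq_right h]; linarith [hGlow M ω]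
      · rw [max_eq_left h]; linarith
    calc ∫ ω, Pm M ω ∂μ ≤ ∫ ω, (ρ ω * G M ω + 1) ∂μ :=
          integral_mono (hPmint M) ((hGint M).add (integrable_const 1)) hple
      _ = ∫ ω, ρ ω * G M ω ∂μ + 1 := by
          rw [integral_add (hGint M) (integrable_const 1), integral_const]; simp
      _ ≤ K + 3 := by linarith [hub M]
  have hPmlint : ∀ M, ∫⁻ ω, ENNReal.ofReal (Pm M ω) ∂μ ≤ ENNReal.ofReal (K + 3) := by
    intro M
    rw [← ofReal_integral_eq_lintegral_ofReal (hPmint M)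
      (Filter.Eventually.of_forall fun ω => le_max_right _ _)]
    exact ENNReal.ofReal_le_ofReal (hPmle M)
  have hPfin : ∫⁻ ω, ENNReal.ofReal (P ω) ∂μ ≤ ENNReal.ofReal (K + 3) := by
    have hfatou : ∫⁻ ω, ENNReal.ofReal (P ω) ∂μ
        ≤ Filter.liminf (fun M => ∫⁻ ω, ENNReal.ofReal (Pm M ω) ∂μ) atTop := by
      refine le_trans (lintegral_mono fun ω => ?_)
        (lintegral_liminf_le fun M => ((hρ_meas.mul (hGmeas M)).max measurable_const).ennreal_ofReal)
      -- ofReal (P ω) ≤ liminf_M ofReal (Pm M ω)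
      have htend : Tendsto (fun M => Pm M ω) atTop
          (nhds (max (ρ ω * (1 + Real.log (ρ ω))) 0)) :=
        (hGtend ω).max tendsto_const_nhds
      have htend2 : Tendsto (fun M => ENNReal.ofReal (Pm M ω)) atTop
          (nhds (ENNReal.ofReal (max (ρ ω * (1 + Real.log (ρ ω))) 0))) :=
        (ENNReal.continuous_ofReal.tendsto _).comp htend
      rw [htend2.liminf_eq]
      apply ENNReal.ofReal_le_ofReal
      simp only [hPdef]
      have hρω := hρ_nonneg ω
      rcases le_total (ρ ω * Real.log (ρ ω)) 0 with h | h
      · rw [max_eq_right h]; exact le_max_right _ _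
      · rw [max_eq_left h]
        refine le_trans ?_ (le_max_left _ _)
        nlinarith
    refine le_trans hfatou ?_
    have := Filter.liminf_le_liminf
      (Filter.Eventually.of_forall hPmlint) (f := atTop (α := ℕ))
    simpa using this
  -- integrability of ρ log ρ
  have hlow : ∀ ω, -1 ≤ ρ ω * Real.log (ρ ω) := by
    intro ω
    rcases eq_or_lt_of_le (hρ_nonneg ω) with h0 | h
    · rw [← h0]; norm_num
    · exact entropy_mul_log_lb h
  have hint : Integrable (fun ω => ρ ω * Real.log (ρ ω)) μ := by
    constructor
    · exact (hρ_meas.mul hρ_meas.log).aestronglyMeasurable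
    · rw [hasFiniteIntegral_iff_norm]
      have hptle : ∀ ω, ENNReal.ofReal ‖ρ ω * Real.log (ρ ω)‖
          ≤ ENNReal.ofReal (P ω) + ENNReal.ofReal 1 := by
        intro ω
        rw [← ENNReal.ofReal_add (le_max_right _ _) zero_le_one]
        apply ENNReal.ofReal_le_ofReal
        rw [Real.norm_eq_abs]
        show |ρ ω * Real.log (ρ ω)| ≤ max (ρ ω * Real.log (ρ ω)) 0 + 1
        rcases le_total (ρ ω * Real.log (ρ ω)) 0 with h | h
        · rw [abs_of_nonpos h, max_eq_right h]; linarith [hlow ω]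
        · rw [abs_of_nonneg h, max_eq_left h]; linarith
      calc ∫⁻ ω, ENNReal.ofReal ‖ρ ω * Real.log (ρ ω)‖ ∂μ
          ≤ ∫⁻ ω, (ENNReal.ofReal (P ω) + ENNReal.ofReal 1) ∂μ := lintegral_mono hptle
        _ = ∫⁻ ω, ENNReal.ofReal (P ω) ∂μ + ENNReal.ofReal 1 := by
            rw [lintegral_add_right _ measurable_const, lintegral_const]
            simp
        _ < ⊤ := by
            have h1 : ∫⁻ ω, ENNReal.ofReal (P ω) ∂μ < ⊤ :=
              lt_of_le_of_lt hPfin ENNReal.ofReal_lt_top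
            exact ENNReal.add_lt_top.2 ⟨h1, ENNReal.ofReal_lt_top⟩
  refine ⟨hint, ?_⟩
  -- dominated convergence on both sides of the key inequality
  have htendL : Tendsto (fun M => ∫ ω, ρ ω * G M ω ∂μ) atTop
      (nhds (∫ ω, ρ ω * (1 + Real.log (ρ ω)) ∂μ)) := by
    refine tendsto_integral_of_dominated_convergence
      (fun ω => ρ ω + |ρ ω * Real.log (ρ ω)|)
      (fun M => (hρ_meas.mul (hGmeas M)).aestronglyMeasurable)
      (hρint.add hint.abs) (fun M => Filter.Eventually.of_forall fun ω => ?_)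
      (Filter.Eventually.of_forall hGtend)
    rw [Real.norm_eq_abs]
    exact hGdom M ω
  have htendR : Tendsto (fun M => ∫ ω, Real.exp (G M ω - 1) ∂μ) atTop (nhds 1) := by
    have := tendsto_integral_of_dominated_convergence
      (fun ω => ρ ω + 1)
      (fun M => (((hGmeas M).sub measurable_const).exp).aestronglyMeasurable)
      (hρint.add (integrable_const 1))
      (fun M => Filter.Eventually.of_forall fun ω => by
        rw [Real.norm_eq_abs, abs_of_pos (Real.exp_pos _)]; exact hexpbd M ω)
      (Filter.Eventually.of_forall hExpTend)
    rwa [hρ1] at this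
  have hfinal : ∫ ω, ρ ω * (1 + Real.log (ρ ω)) ∂μ ≤ K + 1 := by
    refine le_of_tendsto_of_tendsto' htendL
      (tendsto_const_nhds.add htendR) (fun M => ?_)
    exact key (G M) (hGmeas M) (b M) (hGbd M)
  have hsplit : ∫ ω, ρ ω * (1 + Real.log (ρ ω)) ∂μ
      = 1 + ∫ ω, ρ ω * Real.log (ρ ω) ∂μ := by
    have heq : (fun ω => ρ ω * (1 + Real.log (ρ ω)))
        = fun ω => ρ ω + ρ ω * Real.log (ρ ω) := funext fun ω => by ring
    rw [heq, integral_add hρint hint, hρ1]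
  rw [hsplit] at hfinal
  linarith
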